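/- Let X = (X, d_X, μ_X) be an mm-space that is a CD(K,N) space for some K > 0 and N < 0. Then for all κ₀, κ₁ > 0 with κ₀ + κ₁ < 1 and all Borel sets A₀, A₁ ⊆ X with μ_X(A₀) ≥ κ₀ and μ_X(A₁) ≥ κ₁, one has dist(A₀, A₁) ≤ 2·√((1−N)/K)·arcosh( ((κ₀^{1/N} + κ₁^{1/N})/2)^{−N/(1−N)} ), where dist(A₀,A₁) := inf{d_X(x,y) : x ∈ A₀, y ∈ A₁} and arcosh(x) = log(x + √(x²−1)) for x ≥ 1. (Equivalently, the separation distance Sep(X; κ₀, κ₁) is bounded by this quantity.) -/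

import Mathlib

/-- A bundled mm-space: a complete separable metric space with a Borel probability measure. -/
structure MMSpace where
  X : Type
  [metric : MetricSpace X]
  [cpl : CompleteSpace X]
  [sep : TopologicalSpace.SeparableSpace X]
  [mble : MeasurableSpace X]
  [borel : BorelSpace X]
  μ : MeasureTheory.Measure X
  [prob : MeasureTheory.IsProbabilityMeasure μ]

attribute [instance] MMSpace.metric MMSpace.cpl MMSpace.sep MMSpace.mble MMSpace.borel MMSpace.prob

open MeasureTheory ENNReal Filter Topology Set

noncomputable section

/-- A coupling of two measures on `X` is a measure on `X × X` whose marginals are the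
given measures. -/
def IsCoupling {X : Type*} [MeasurableSpace X] (π : Measure (X × X)) (μ ν : Measure X) : Prop :=
  π.map Prod.fst = μ ∧ π.map Prod.snd = ν

/-- A measure has finite second moment if `∫ d(x,x₀)² dμ < ∞` for some base point. -/
def HasFiniteSecondMoment {X : Type*} [PseudoMetricSpace X] [MeasurableSpace X]
    (μ : Measure X) : Prop :=
  ∃ x₀ : X, ∫⁻ x, ENNReal.ofReal (dist x x₀) ^ 2 ∂μ < ∞

/-- The square-root of the quadratic transport cost of a coupling. -/
def cost2 {X : Type*} [PseudoMetricSpace X] [MeasurableSpace X] (π : Measure (X × X)) : ℝ≥0∞ :=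
  (∫⁻ p, ENNReal.ofReal (dist p.1 p.2) ^ 2 ∂π) ^ (1 / 2 : ℝ)

/-- The 2-Wasserstein distance (valued in `[0,∞]`). -/
def W2 {X : Type*} [PseudoMetricSpace X] [MeasurableSpace X] (μ ν : Measure X) : ℝ≥0∞ :=
  ⨅ (π : Measure (X × X)) (_ : IsCoupling π μ ν), cost2 π

/-- A coupling is optimal if it attains the 2-Wasserstein distance. -/
def IsOptimalCoupling {X : Type*} [PseudoMetricSpace X] [MeasurableSpace X]
    (π : Measure (X × X)) (μ ν : Measure X) : Prop :=
  IsCoupling π μ ν ∧ cost2 π = W2 μ ν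

open Classical in
/-- The Rényi entropy `S_{N',μ}(ν) = ∫ ρ^{1-1/N'} dμ` if `ν = ρμ ≪ μ`, and `∞` otherwise. -/
def renyiEntropy {X : Type*} [MeasurableSpace X] (N' : ℝ) (μ ν : Measure X) : ℝ≥0∞ :=
  if ν ≪ μ then ∫⁻ x, (ν.rnDeriv μ x) ^ (1 - 1 / N') ∂μ else ∞

/-- Weak convergence of a sequence of measures: convergence of integrals of all bounded
continuous functions. -/
def WeakConv {X : Type*} [TopologicalSpace X] [MeasurableSpace X]
    (μs : ℕ → Measure X) (μ : Measure X) : Prop :=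
  ∀ f : BoundedContinuousFunction X ℝ,
    Tendsto (fun n => ∫ x, f x ∂(μs n)) atTop (𝓝 (∫ x, f x ∂μ))

/-- Tightness of a sequence of measures. -/
def IsTightSeq {X : Type*} [TopologicalSpace X] [MeasurableSpace X]
    (μs : ℕ → Measure X) : Prop :=
  ∀ ε : ℝ, 0 < ε → ∃ K : Set X, IsCompact K ∧ ∀ n, μs n Kᶜ < ENNReal.ofReal ε

/-- The function `s_κ`, with the convention `s_κ(0) = 1`. -/
def sKappa (κ θ : ℝ) : ℝ :=
  if θ = 0 then 1
  else if 0 < κ then Real.sin (Real.sqrt κ * θ) / (Real.sqrt κ * θ)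
  else if κ < 0 then Real.sinh (Real.sqrt (-κ) * θ) / (Real.sqrt (-κ) * θ)
  else 1

/-- `ω_κ = π/√κ` for `κ > 0` and `∞` otherwise. -/
def omegaKappa (κ : ℝ) : ℝ≥0∞ :=
  if 0 < κ then ENNReal.ofReal (Real.pi / Real.sqrt κ) else ∞

/-- The coefficient `τ_{K,N}^{(t)}(θ)`, valued in `[0,∞]`. -/
def tauCoeff (K N t θ : ℝ) : ℝ≥0∞ :=
  if ENNReal.ofReal θ < omegaKappa (K / (N - 1)) then
    ENNReal.ofReal (t * (sKappa (K / (N - 1)) (t * θ) / sKappa (K / (N - 1)) θ) ^ (1 - 1 / N))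
  else ∞

/-- The coefficient `σ_κ^{(t)}(θ)`, valued in `[0,∞]`. -/
def sigmaCoeff (κ t θ : ℝ) : ℝ≥0∞ :=
  if ENNReal.ofReal θ < omegaKappa κ then
    ENNReal.ofReal (t * sKappa κ (t * θ) / sKappa κ θ)
  else ∞

/-- The curvature-dimension condition `CD(K,N)` for `N < 0`, for a (probability) measure on a
metric space. -/
def IsCDSpace {X : Type*} [MetricSpace X] [MeasurableSpace X] (K N : ℝ) (μX : Measure X) : Prop :=
  ∀ ν₀ ν₁ : Measure X, IsProbabilityMeasure ν₀ → IsProbabilityMeasure ν₁ →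
    ν₀ ≪ μX → ν₁ ≪ μX →
    HasFiniteSecondMoment ν₀ → HasFiniteSecondMoment ν₁ →
    renyiEntropy N μX ν₀ < ∞ → renyiEntropy N μX ν₁ < ∞ →
    ∃ (νt : ℝ → Measure X) (π : Measure (X × X)),
      νt 0 = ν₀ ∧ νt 1 = ν₁ ∧
      (∀ s ∈ Icc (0:ℝ) 1, ∀ t ∈ Icc (0:ℝ) 1,
        W2 (νt s) (νt t) = ENNReal.ofReal |s - t| * W2 ν₀ ν₁) ∧
      IsOptimalCoupling π ν₀ ν₁ ∧
      (∀ t ∈ Icc (0:ℝ) 1, ∀ N' ∈ Ico N (0:ℝ),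
        renyiEntropy N' μX ν₀ < ∞ → renyiEntropy N' μX ν₁ < ∞ →
        renyiEntropy N' μX (νt t) ≤
          (∫⁻ p, tauCoeff K N' (1 - t) (dist p.1 p.2) * (ν₀.rnDeriv μX p.1) ^ (-(1 / N')) ∂π)
          + ∫⁻ p, tauCoeff K N' t (dist p.1 p.2) * (ν₁.rnDeriv μX p.2) ^ (-(1 / N')) ∂π)

/-- The reduced curvature-dimension condition `CD*(K,N)` for `N < 0`. -/
def IsCDStarSpace {X : Type*} [MetricSpace X] [MeasurableSpace X] (K N : ℝ)
    (μX : Measure X) : Prop :=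
  ∀ ν₀ ν₁ : Measure X, IsProbabilityMeasure ν₀ → IsProbabilityMeasure ν₁ →
    ν₀ ≪ μX → ν₁ ≪ μX →
    HasFiniteSecondMoment ν₀ → HasFiniteSecondMoment ν₁ →
    renyiEntropy N μX ν₀ < ∞ → renyiEntropy N μX ν₁ < ∞ →
    ∃ (νt : ℝ → Measure X) (π : Measure (X × X)),
      νt 0 = ν₀ ∧ νt 1 = ν₁ ∧
      (∀ s ∈ Icc (0:ℝ) 1, ∀ t ∈ Icc (0:ℝ) 1,
        W2 (νt s) (νt t) = ENNReal.ofReal |s - t| * W2 ν₀ ν₁) ∧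
      IsOptimalCoupling π ν₀ ν₁ ∧
      (∀ t ∈ Icc (0:ℝ) 1, ∀ N' ∈ Ico N (0:ℝ),
        renyiEntropy N' μX ν₀ < ∞ → renyiEntropy N' μX ν₁ < ∞ →
        renyiEntropy N' μX (νt t) ≤
          (∫⁻ p, sigmaCoeff (K / N') (1 - t) (dist p.1 p.2)
              * (ν₀.rnDeriv μX p.1) ^ (-(1 / N')) ∂π)
          + ∫⁻ p, sigmaCoeff (K / N') t (dist p.1 p.2)
              * (ν₁.rnDeriv μX p.2) ^ (-(1 / N')) ∂π)

/-- The conditioned (normalized restricted) measure `ν_B`. -/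
def condProb {X : Type*} [MeasurableSpace X] (ν : Measure X) (B : Set X) : Measure X :=
  (ν B)⁻¹ • ν.restrict B

/-- Inverse hyperbolic cosine, `arcosh x = log (x + √(x²-1))`. -/
def acosh (x : ℝ) : ℝ := Real.log (x + Real.sqrt (x ^ 2 - 1))

/-- A parameter of an mm-space: a Borel map `[0,1) → X` pushing the Lebesgue measure to `μ`. -/
def IsParameter (A : MMSpace) (φ : ℝ → A.X) : Prop :=
  Measurable φ ∧ Measure.map φ (volume.restrict (Ico (0:ℝ) 1)) = A.μ

/-- The Ky Fan distance between two measurable functions on `[0,1)`. -/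
def kyFan (f g : ℝ → ℝ) : ℝ :=
  sInf {ε : ℝ | 0 ≤ ε ∧
    (volume.restrict (Ico (0:ℝ) 1)) {x | ε < |f x - g x|} ≤ ENNReal.ofReal ε}

/-- The pullback of the 1-Lipschitz functions on an mm-space by a parameter. -/
def pullLip (A : MMSpace) (φ : ℝ → A.X) : Set (ℝ → ℝ) :=
  {h | ∃ f : A.X → ℝ, LipschitzWith 1 f ∧ h = f ∘ φ}

/-- The Hausdorff distance between two sets of functions with respect to the Ky Fan metric. -/
def hausdorffKF (A B : Set (ℝ → ℝ)) : ℝ :=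
  max (⨆ f ∈ A, ⨅ g ∈ B, kyFan f g) (⨆ g ∈ B, ⨅ f ∈ A, kyFan f g)

/-- The observable distance between two mm-spaces. -/
def dconc (A B : MMSpace) : ℝ :=
  sInf {r : ℝ | ∃ φ ψ, IsParameter A φ ∧ IsParameter B ψ ∧
    r = hausdorffKF (pullLip A φ) (pullLip B ψ)}

end

noncomputable section

/-- The smooth approximation `F_a(x) = a⁻¹ log(e^{ax} + e^{-ax})` of `|x|`. -/
def Fa (a x : ℝ) : ℝ := a⁻¹ * Real.log (Real.exp (a * x) + Real.exp (-(a * x)))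

/-- A (minimizing, constant-speed) geodesic parametrized by `[0,1]`. -/
def IsGeodOn01 {X : Type*} [PseudoMetricSpace X] (γ : ℝ → X) : Prop :=
  ∀ s ∈ Set.Icc (0:ℝ) 1, ∀ s' ∈ Set.Icc (0:ℝ) 1,
    dist (γ s) (γ s') = |s - s'| * dist (γ 0) (γ 1)

end

section SepAux

lemma acosh_cosh {y : ℝ} (hy : 0 ≤ y) : acosh (Real.cosh y) = y := by
  unfold acosh
  have h1 : Real.cosh y ^ 2 - 1 = Real.sinh y ^ 2 := by
    have := Real.cosh_sq_sub_sinh_sq y; linarith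
  have h2 : (0:ℝ) ≤ Real.sinh y := by
    rw [← Real.sinh_zero]
    exact (Real.sinh_le_sinh).2 hy
  rw [h1, Real.sqrt_sq h2, Real.cosh_add_sinh, Real.log_exp]

lemma acosh_mono {x y : ℝ} (hx : 1 ≤ x) (hxy : x ≤ y) : acosh x ≤ acosh y := by
  unfold acosh
  have hs : Real.sqrt (x ^ 2 - 1) ≤ Real.sqrt (y ^ 2 - 1) := by
    apply Real.sqrt_le_sqrt; nlinarith
  apply Real.log_le_log (by positivity) (by linarith)

lemma le_acosh_of_cosh_le {y z : ℝ} (hy : 0 ≤ y) (h : Real.cosh y ≤ z) : y ≤ acosh z := by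
  rw [← acosh_cosh hy]
  exact acosh_mono (Real.one_le_cosh y) h

lemma acosh_continuousAt {x : ℝ} (hx : 0 < x) : ContinuousAt acosh x := by
  unfold acosh
  apply ContinuousAt.comp (g := Real.log)
  · exact Real.continuousAt_log (by positivity)
  · exact continuousAt_id.add
      (Real.continuous_sqrt.continuousAt.comp (by fun_prop))

lemma tauCoeff_half {K N : ℝ} (hK : 0 < K) (hN : N < 0) {θ : ℝ} (hθ : 0 ≤ θ) :
    tauCoeff K N (1/2 : ℝ) θ =
      ENNReal.ofReal (2⁻¹ * Real.cosh (Real.sqrt (K / (1 - N)) * θ / 2) ^ (1 / N - 1 : ℝ)) := by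
  have hκ : K / (N - 1) < 0 := div_neg_of_pos_of_neg hK (by linarith)
  have hω : omegaKappa (K / (N - 1)) = ∞ := by
    rw [omegaKappa, if_neg (not_lt.2 hκ.le)]
  have ha : Real.sqrt (-(K / (N - 1))) = Real.sqrt (K / (1 - N)) := by
    rw [show K / (1 - N) = -(K / (N - 1)) by rw [show (1 - N) = -(N - 1) by ring, div_neg]]
  set a := Real.sqrt (K / (1 - N)) with ha_def
  have hapos : 0 < a := Real.sqrt_pos.2 (div_pos hK (by linarith))
  rw [tauCoeff, if_pos (by rw [hω]; exact ENNReal.ofReal_lt_top)]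
  have hcosh : 0 < Real.cosh (a * θ / 2) := lt_of_lt_of_le one_pos (Real.one_le_cosh _)
  have hratio : sKappa (K / (N - 1)) (1/2 * θ) / sKappa (K / (N - 1)) θ
      = (Real.cosh (a * θ / 2))⁻¹ := by
    rcases eq_or_lt_of_le hθ with h0 | h0
    · rw [← h0]; simp [sKappa, hcosh.ne']
    · have hθ2 : (1/2 : ℝ) * θ ≠ 0 := by positivity
      rw [sKappa, if_neg hθ2, if_neg (not_lt.2 hκ.le), if_pos hκ, sKappa, if_neg h0.ne',
        if_neg (not_lt.2 hκ.le), if_pos hκ, ha]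
      have hsinh2 : Real.sinh (a * θ) = 2 * Real.sinh (a * θ / 2) * Real.cosh (a * θ / 2) := by
        have h := Real.sinh_two_mul (a * θ / 2)
        rw [show 2 * (a * θ / 2) = a * θ by ring] at h
        exact h
      have hspos : 0 < Real.sinh (a * θ / 2) := by
        rw [← Real.sinh_zero]
        exact Real.sinh_lt_sinh.2 (by positivity)
      rw [show a * (1/2 * θ) = a * θ / 2 by ring, hsinh2]
      field_simp
  rw [hratio, Real.inv_rpow hcosh.le, ← Real.rpow_neg hcosh.le,
    show -(1 - 1/N) = 1/N - 1 by ring]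
  norm_num

end SepAux

section SepAux2
open MeasureTheory ENNReal Set

lemma ennreal_rpow_antitone {x y : ℝ≥0∞} {z : ℝ} (hxy : x ≤ y) (hz : z ≤ 0) :
    y ^ z ≤ x ^ z := by
  have hy' : y ^ z = (y ^ (-z))⁻¹ := by rw [← ENNReal.rpow_neg, neg_neg]
  have hx' : x ^ z = (x ^ (-z))⁻¹ := by rw [← ENNReal.rpow_neg, neg_neg]
  rw [hy', hx']
  exact ENNReal.inv_le_inv.2 (ENNReal.rpow_le_rpow hxy (neg_nonneg.2 hz))

variable {Y : Type*} [MeasurableSpace Y]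

lemma condProb_isProb {μ : Measure Y} [MeasureTheory.IsFiniteMeasure μ] {A : Set Y}
    (h0 : μ A ≠ 0) : IsProbabilityMeasure (condProb μ A) := by
  constructor
  rw [condProb, Measure.smul_apply, Measure.restrict_apply MeasurableSet.univ, univ_inter,
    smul_eq_mul, ENNReal.inv_mul_cancel h0 (measure_ne_top μ A)]

lemma condProb_ac {μ : Measure Y} {A : Set Y} : condProb μ A ≪ μ := by
  intro s hs
  rw [condProb, Measure.smul_apply]
  have h1 : μ.restrict A s = 0 :=
    le_antisymm (le_trans (Measure.restrict_apply_le A s) hs.le) (zero_le)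
  rw [h1, smul_eq_mul, mul_zero]

lemma condProb_compl_zero {μ : Measure Y} {A : Set Y} (hA : MeasurableSet A) :
    condProb μ A Aᶜ = 0 := by
  rw [condProb, Measure.smul_apply, Measure.restrict_apply hA.compl, compl_inter_self,
    measure_empty, smul_eq_mul, mul_zero]

lemma condProb_rnDeriv_le {μ : Measure Y} [IsFiniteMeasure μ] {A : Set Y}
    (hA : MeasurableSet A) (h0 : μ A ≠ 0) :
    (condProb μ A).rnDeriv μ ≤ᵐ[μ] fun _ => (μ A)⁻¹ := by
  have h1 := Measure.rnDeriv_smul_left_of_ne_top (μ.restrict A) μ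
    (r := (μ A)⁻¹) (ENNReal.inv_ne_top.2 h0)
  have h2 := Measure.rnDeriv_restrict_self μ hA
  rw [condProb]
  filter_upwards [h1, h2] with x hx1 hx2
  rw [hx1, Pi.smul_apply, hx2, smul_eq_mul]
  by_cases hx : x ∈ A
  · simp [hx]
  · simp [hx]

lemma renyi_condProb_lt_top {μ : Measure Y} [IsProbabilityMeasure μ] {A : Set Y}
    (hA : MeasurableSet A) (h0 : μ A ≠ 0) {N' : ℝ} (hN' : N' < 0) :
    renyiEntropy N' μ (condProb μ A) < ∞ := by
  rw [renyiEntropy, if_pos condProb_ac]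
  have hp : (0:ℝ) ≤ 1 - 1/N' := by
    have : 1/N' < 0 := div_neg_of_pos_of_neg one_pos hN'
    linarith
  calc ∫⁻ x, ((condProb μ A).rnDeriv μ x) ^ (1 - 1/N') ∂μ
      ≤ ∫⁻ _, ((μ A)⁻¹) ^ (1 - 1/N') ∂μ := by
        apply lintegral_mono_ae
        filter_upwards [condProb_rnDeriv_le hA h0] with x hx
        exact ENNReal.rpow_le_rpow hx hp
    _ = ((μ A)⁻¹) ^ (1 - 1/N') := by rw [lintegral_const, measure_univ, mul_one]
    _ < ∞ := ENNReal.rpow_lt_top_of_nonneg hp (ENNReal.inv_ne_top.2 h0)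

lemma isCoupling_prod (ν₀ ν₁ : Measure Y) [IsProbabilityMeasure ν₀] [IsProbabilityMeasure ν₁] :
    IsCoupling (ν₀.prod ν₁) ν₀ ν₁ := by
  constructor
  · rw [Measure.map_fst_prod, measure_univ, one_smul]
  · rw [Measure.map_snd_prod, measure_univ, one_smul]

lemma IsCoupling.univ_eq {π : Measure (Y × Y)} {ν₀ ν₁ : Measure Y}
    (h : IsCoupling π ν₀ ν₁) : π univ = ν₀ univ := by
  rw [← h.1, Measure.map_apply measurable_fst MeasurableSet.univ, preimage_univ]

lemma IsCoupling.snd_univ_eq {π : Measure (Y × Y)} {ν₀ ν₁ : Measure Y}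
    (h : IsCoupling π ν₀ ν₁) : π univ = ν₁ univ := by
  rw [← h.2, Measure.map_apply measurable_snd MeasurableSet.univ, preimage_univ]

lemma IsCoupling.fst_null {π : Measure (Y × Y)} {ν₀ ν₁ : Measure Y}
    (h : IsCoupling π ν₀ ν₁) {E : Set Y} (hE : MeasurableSet E) (h0 : ν₀ E = 0) :
    π {p | p.1 ∈ E} = 0 := by
  have heq : {p : Y × Y | p.1 ∈ E} = Prod.fst ⁻¹' E := rfl
  rw [heq, ← Measure.map_apply measurable_fst hE, h.1]
  exact h0

lemma IsCoupling.snd_null {π : Measure (Y × Y)} {ν₀ ν₁ : Measure Y}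
    (h : IsCoupling π ν₀ ν₁) {E : Set Y} (hE : MeasurableSet E) (h0 : ν₁ E = 0) :
    π {p | p.2 ∈ E} = 0 := by
  have heq : {p : Y × Y | p.2 ∈ E} = Prod.snd ⁻¹' E := rfl
  rw [heq, ← Measure.map_apply measurable_snd hE, h.2]
  exact h0

lemma exists_coupling_of_W2_ne_top {X : Type*} [PseudoMetricSpace X] [MeasurableSpace X]
    {μ ν : Measure X} (h : W2 μ ν ≠ ∞) : ∃ π, IsCoupling π μ ν := by
  by_contra hc
  push_neg at hc
  apply h
  rw [W2]
  exact iInf_eq_top.2 fun π => iInf_eq_top.2 fun hP => absurd hP (hc π)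

lemma hasFiniteSecondMoment_of_bounded {X : Type*} [MetricSpace X] [MeasurableSpace X]
    {ν : Measure X} [IsProbabilityMeasure ν] {x₀ : X} {R : ℝ}
    (h : ν (Metric.closedBall x₀ R)ᶜ = 0) : HasFiniteSecondMoment ν := by
  refine ⟨x₀, ?_⟩
  have hbd : ∫⁻ x, ENNReal.ofReal (dist x x₀) ^ 2 ∂ν
      ≤ ∫⁻ _, ENNReal.ofReal (max R 0) ^ 2 ∂ν := by
    apply lintegral_mono_ae
    rw [ae_iff]
    refine measure_mono_null (fun x hx => ?_) h
    simp only [mem_setOf_eq, not_le] at hx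
    simp only [mem_compl_iff, Metric.mem_closedBall, not_le]
    by_contra hball
    push_neg at hball
    exact absurd (pow_le_pow_left₀ (zero_le)
      (ENNReal.ofReal_le_ofReal (le_trans hball (le_max_left R 0))) 2) (not_le.2 hx)
  refine lt_of_le_of_lt hbd ?_
  rw [lintegral_const, measure_univ, mul_one]
  exact ENNReal.pow_lt_top ENNReal.ofReal_lt_top

lemma prod_closedBall_compl_null {X : Type*} [MetricSpace X] [MeasurableSpace X]
    {ν₀ ν₁ : Measure X} [IsProbabilityMeasure ν₀] [IsProbabilityMeasure ν₁]
    {x₀ : X} {R : ℝ} (h₀ : ν₀ (Metric.closedBall x₀ R)ᶜ = 0)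
    (h₁ : ν₁ (Metric.closedBall x₀ R)ᶜ = 0) :
    (ν₀.prod ν₁) ((Metric.closedBall x₀ R) ×ˢ (Metric.closedBall x₀ R))ᶜ = 0 := by
  set B := Metric.closedBall x₀ R
  have hsub : (B ×ˢ B)ᶜ ⊆ (Bᶜ ×ˢ univ) ∪ (univ ×ˢ Bᶜ) := by
    intro p hp
    simp only [mem_compl_iff, mem_prod, not_and_or] at hp
    rcases hp with hp | hp
    · exact Or.inl ⟨hp, mem_univ _⟩
    · exact Or.inr ⟨mem_univ _, hp⟩
  refine measure_mono_null hsub (le_antisymm (le_trans (measure_union_le _ _) ?_) (zero_le))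
  rw [Measure.prod_prod, Measure.prod_prod, h₀, h₁, measure_univ, zero_mul, mul_zero, add_zero]

lemma w2_lt_top_of_bounded {X : Type*} [MetricSpace X] [MeasurableSpace X]
    {ν₀ ν₁ : Measure X} [IsProbabilityMeasure ν₀] [IsProbabilityMeasure ν₁]
    (x₀ : X) (R : ℝ) (h₀ : ν₀ (Metric.closedBall x₀ R)ᶜ = 0)
    (h₁ : ν₁ (Metric.closedBall x₀ R)ᶜ = 0) : W2 ν₀ ν₁ < ∞ := by
  have hcoup := isCoupling_prod ν₀ ν₁
  have hle : W2 ν₀ ν₁ ≤ cost2 (ν₀.prod ν₁) := by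
    rw [W2]; exact iInf₂_le (ν₀.prod ν₁) hcoup
  refine lt_of_le_of_lt hle ?_
  rw [cost2]
  refine ENNReal.rpow_lt_top_of_nonneg (by norm_num) ?_
  have hae : ∀ᵐ p ∂(ν₀.prod ν₁),
      ENNReal.ofReal (dist p.1 p.2) ^ 2 ≤ ENNReal.ofReal (2 * max R 0) ^ 2 := by
    rw [ae_iff]
    refine measure_mono_null (fun p hp => ?_) (prod_closedBall_compl_null h₀ h₁)
    simp only [mem_setOf_eq, not_le] at hp
    simp only [mem_compl_iff, mem_prod, Metric.mem_closedBall]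
    intro hball
    have hd : dist p.1 p.2 ≤ 2 * max R 0 := by
      have := dist_triangle p.1 x₀ p.2
      have h1 := hball.1
      have h2 := hball.2
      rw [dist_comm x₀ p.2] at this
      have hR0 : R ≤ max R 0 := le_max_left R 0
      linarith
    exact absurd (pow_le_pow_left₀ (zero_le) (ENNReal.ofReal_le_ofReal hd) 2) (not_le.2 hp)
  have hbd := lintegral_mono_ae hae
  rw [lintegral_const, measure_univ, mul_one] at hbd
  exact (lt_of_le_of_lt hbd (ENNReal.pow_lt_top ENNReal.ofReal_lt_top)).ne

lemma one_le_renyiEntropy {μ ν : Measure Y} [IsProbabilityMeasure μ]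
    (hν : ν univ = 1) {N : ℝ} (hN : N < 0) : 1 ≤ renyiEntropy N μ ν := by
  rw [renyiEntropy]
  split_ifs with hac
  · haveI : IsFiniteMeasure ν := ⟨by rw [hν]; exact ENNReal.one_lt_top⟩
    set p : ℝ := 1 - 1/N with hp_def
    have hN' : 1/N < 0 := div_neg_of_pos_of_neg one_pos hN
    have hp : 1 < p := by rw [hp_def]; linarith
    have hpq : p.HolderConjugate (Real.conjExponent p) := Real.HolderConjugate.conjExponent hp
    have hH := ENNReal.lintegral_mul_le_Lp_mul_Lq μ hpq
      (Measure.measurable_rnDeriv ν μ).aemeasurable (aemeasurable_const (b := (1:ℝ≥0∞)))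
    simp only [Pi.mul_apply, mul_one, ENNReal.one_rpow, lintegral_one, measure_univ,
      mul_one] at hH
    rw [Measure.lintegral_rnDeriv hac, hν] at hH
    calc (1:ℝ≥0∞) = 1 ^ p := (ENNReal.one_rpow p).symm
      _ ≤ ((∫⁻ x, (ν.rnDeriv μ x) ^ p ∂μ) ^ (1/p)) ^ p :=
          ENNReal.rpow_le_rpow hH (by linarith)
      _ = ∫⁻ x, (ν.rnDeriv μ x) ^ p ∂μ := by
          rw [← ENNReal.rpow_mul, one_div, inv_mul_cancel₀ (by linarith : p ≠ 0),
            ENNReal.rpow_one]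
  · exact le_top

end SepAux2

section SepAux3
open MeasureTheory ENNReal Set Metric

lemma key_cosh_bound {X : Type*} [MetricSpace X] [CompleteSpace X]
    [TopologicalSpace.SeparableSpace X] [MeasurableSpace X] [BorelSpace X]
    (μX : Measure X) [IsProbabilityMeasure μX]
    (K N : ℝ) (hK : 0 < K) (hN : N < 0) (hCD : IsCDSpace K N μX)
    (r₀ r₁ : ℝ) (hr₀ : 0 < r₀) (hr₁ : 0 < r₁)
    (A₀ A₁ : Set X) (hA₀ : MeasurableSet A₀) (hA₁ : MeasurableSet A₁)
    (x₀ : X) (R : ℝ) (hb₀ : A₀ ⊆ Metric.closedBall x₀ R) (hb₁ : A₁ ⊆ Metric.closedBall x₀ R)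
    (hm₀ : ENNReal.ofReal r₀ ≤ μX A₀) (hm₁ : ENNReal.ofReal r₁ ≤ μX A₁)
    (D : ℝ) (hD : 0 ≤ D) (hdist : ∀ x ∈ A₀, ∀ y ∈ A₁, D ≤ dist x y) :
    Real.cosh (Real.sqrt (K / (1 - N)) * D / 2) ^ (1 - 1/N : ℝ)
      ≤ (r₀ ^ (1/N : ℝ) + r₁ ^ (1/N : ℝ)) / 2 := by
  have hNinv : 1/N < 0 := div_neg_of_pos_of_neg one_pos hN
  have hN1 : (1:ℝ)/N - 1 ≤ 0 := by linarith
  have h0₀ : μX A₀ ≠ 0 := ((ENNReal.ofReal_pos.2 hr₀).trans_le hm₀).ne'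
  have h0₁ : μX A₁ ≠ 0 := ((ENNReal.ofReal_pos.2 hr₁).trans_le hm₁).ne'
  set ν₀ := condProb μX A₀ with hν₀def
  set ν₁ := condProb μX A₁ with hν₁def
  haveI hP₀ : IsProbabilityMeasure ν₀ := condProb_isProb h0₀
  haveI hP₁ : IsProbabilityMeasure ν₁ := condProb_isProb h0₁
  have hc₀ : ν₀ A₀ᶜ = 0 := condProb_compl_zero hA₀
  have hc₁ : ν₁ A₁ᶜ = 0 := condProb_compl_zero hA₁
  have hball₀ : ν₀ (Metric.closedBall x₀ R)ᶜ = 0 :=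
    measure_mono_null (compl_subset_compl.2 hb₀) hc₀
  have hball₁ : ν₁ (Metric.closedBall x₀ R)ᶜ = 0 :=
    measure_mono_null (compl_subset_compl.2 hb₁) hc₁
  obtain ⟨νt, π, hvt0, hvt1, hgeo, hopt, hineq⟩ :=
    hCD ν₀ ν₁ hP₀ hP₁ condProb_ac condProb_ac
      (hasFiniteSecondMoment_of_bounded hball₀) (hasFiniteSecondMoment_of_bounded hball₁)
      (renyi_condProb_lt_top hA₀ h0₀ hN) (renyi_condProb_lt_top hA₁ h0₁ hN)
  have hw2 : W2 ν₀ ν₁ < ∞ := w2_lt_top_of_bounded x₀ R hball₀ hball₁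
  have hmem : (1/2 : ℝ) ∈ Icc (0:ℝ) 1 := by norm_num
  have hgeo2 := hgeo 0 (by norm_num) (1/2) hmem
  rw [hvt0] at hgeo2
  have hW2half : W2 ν₀ (νt (1/2)) ≠ ∞ := by
    rw [hgeo2]
    exact (ENNReal.mul_lt_top ENNReal.ofReal_lt_top hw2).ne
  obtain ⟨π', hπ'⟩ := exists_coupling_of_W2_ne_top hW2half
  have hmass : νt (1/2) univ = 1 := by
    rw [← hπ'.snd_univ_eq, hπ'.univ_eq, measure_univ]
  have hmain := hineq (1/2) hmem N ⟨le_refl N, hN⟩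
    (renyi_condProb_lt_top hA₀ h0₀ hN) (renyi_condProb_lt_top hA₁ h0₁ hN)
  rw [show (1:ℝ) - 1/2 = 1/2 by norm_num] at hmain
  have h1le : (1:ℝ≥0∞) ≤ renyiEntropy N μX (νt (1/2)) := one_le_renyiEntropy hmass hN
  have hπ := hopt.1
  have hπuniv : π univ = 1 := by rw [hπ.univ_eq, measure_univ]
  -- a.e. facts
  have hπA₀ : ∀ᵐ p ∂π, p.1 ∈ A₀ := by
    rw [ae_iff]; exact hπ.fst_null hA₀.compl hc₀
  have hπA₁ : ∀ᵐ p ∂π, p.2 ∈ A₁ := by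
    rw [ae_iff]; exact hπ.snd_null hA₁.compl hc₁
  have hrn₀ : ∀ᵐ p ∂π, ν₀.rnDeriv μX p.1 ≤ (μX A₀)⁻¹ := by
    have hae2 : ∀ᵐ x ∂μX, ν₀.rnDeriv μX x ≤ (μX A₀)⁻¹ := condProb_rnDeriv_le hA₀ h0₀
    rw [ae_iff] at hae2 ⊢
    simp only [not_le] at hae2 ⊢
    exact hπ.fst_null (measurableSet_lt measurable_const (Measure.measurable_rnDeriv _ _))
      (condProb_ac hae2)
  have hrn₁ : ∀ᵐ p ∂π, ν₁.rnDeriv μX p.2 ≤ (μX A₁)⁻¹ := by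
    have hae2 : ∀ᵐ x ∂μX, ν₁.rnDeriv μX x ≤ (μX A₁)⁻¹ := condProb_rnDeriv_le hA₁ h0₁
    rw [ae_iff] at hae2 ⊢
    simp only [not_le] at hae2 ⊢
    exact hπ.snd_null (measurableSet_lt measurable_const (Measure.measurable_rnDeriv _ _))
      (condProb_ac hae2)
  have hcoshD : (0:ℝ) < Real.cosh (Real.sqrt (K / (1 - N)) * D / 2) :=
    lt_of_lt_of_le one_pos (Real.one_le_cosh _)
  have hcD : (0:ℝ) ≤ 2⁻¹ * Real.cosh (Real.sqrt (K / (1 - N)) * D / 2) ^ (1/N - 1 : ℝ) := by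
    positivity
  -- bound on the tau coefficient
  have htau : ∀ p : X × X, p.1 ∈ A₀ → p.2 ∈ A₁ →
      tauCoeff K N (1/2) (dist p.1 p.2) ≤
        ENNReal.ofReal (2⁻¹ * Real.cosh (Real.sqrt (K / (1 - N)) * D / 2) ^ (1/N - 1 : ℝ)) := by
    intro p h2 h3
    have hd : D ≤ dist p.1 p.2 := hdist _ h2 _ h3
    rw [tauCoeff_half hK hN dist_nonneg]
    apply ENNReal.ofReal_le_ofReal
    apply mul_le_mul_of_nonneg_left ?_ (by norm_num)
    have ha0 : (0:ℝ) ≤ Real.sqrt (K / (1 - N)) := Real.sqrt_nonneg _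
    have h1c : Real.cosh (Real.sqrt (K / (1 - N)) * D / 2)
        ≤ Real.cosh (Real.sqrt (K / (1 - N)) * dist p.1 p.2 / 2) := by
      rw [Real.cosh_le_cosh, abs_of_nonneg (by positivity), abs_of_nonneg (by positivity)]
      have := mul_le_mul_of_nonneg_left hd ha0
      linarith
    exact Real.rpow_le_rpow_of_nonpos hcoshD h1c hN1
  -- bound on the density factor
  have hden : ∀ (A : Set X) (r : ℝ), 0 < r → ENNReal.ofReal r ≤ μX A → μX A ≠ 0 →
      ((μX A)⁻¹) ^ (-(1/N)) ≤ ENNReal.ofReal (r ^ (1/N : ℝ)) := by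
    intro A r hr hm h0
    have h1 : ((μX A)⁻¹) ^ (-(1/N)) = (μX A) ^ (1/N) := by
      rw [ENNReal.inv_rpow, ENNReal.rpow_neg, inv_inv]
    rw [h1, ← ENNReal.ofReal_rpow_of_pos hr]
    exact ennreal_rpow_antitone hm hNinv.le
  have hbound₀ : ∫⁻ p, tauCoeff K N (1/2) (dist p.1 p.2) * (ν₀.rnDeriv μX p.1) ^ (-(1/N)) ∂π
      ≤ ENNReal.ofReal (2⁻¹ * Real.cosh (Real.sqrt (K / (1 - N)) * D / 2) ^ (1/N - 1 : ℝ))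
        * ENNReal.ofReal (r₀ ^ (1/N : ℝ)) := by
    have hae : ∀ᵐ p ∂π, tauCoeff K N (1/2) (dist p.1 p.2) * (ν₀.rnDeriv μX p.1) ^ (-(1/N))
        ≤ ENNReal.ofReal (2⁻¹ * Real.cosh (Real.sqrt (K / (1 - N)) * D / 2) ^ (1/N - 1 : ℝ))
          * ENNReal.ofReal (r₀ ^ (1/N : ℝ)) := by
      filter_upwards [hrn₀, hπA₀, hπA₁] with p h1 h2 h3
      refine mul_le_mul' (htau p h2 h3) ?_
      calc (ν₀.rnDeriv μX p.1) ^ (-(1/N)) ≤ ((μX A₀)⁻¹) ^ (-(1/N)) :=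
            ENNReal.rpow_le_rpow h1 (by linarith)
        _ ≤ ENNReal.ofReal (r₀ ^ (1/N : ℝ)) := hden A₀ r₀ hr₀ hm₀ h0₀
    calc ∫⁻ p, tauCoeff K N (1/2) (dist p.1 p.2) * (ν₀.rnDeriv μX p.1) ^ (-(1/N)) ∂π
        ≤ ∫⁻ _, ENNReal.ofReal (2⁻¹ * Real.cosh (Real.sqrt (K / (1 - N)) * D / 2) ^ (1/N - 1 : ℝ))
          * ENNReal.ofReal (r₀ ^ (1/N : ℝ)) ∂π := lintegral_mono_ae hae
      _ = _ := by rw [lintegral_const, hπuniv, mul_one]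
  have hbound₁ : ∫⁻ p, tauCoeff K N (1/2) (dist p.1 p.2) * (ν₁.rnDeriv μX p.2) ^ (-(1/N)) ∂π
      ≤ ENNReal.ofReal (2⁻¹ * Real.cosh (Real.sqrt (K / (1 - N)) * D / 2) ^ (1/N - 1 : ℝ))
        * ENNReal.ofReal (r₁ ^ (1/N : ℝ)) := by
    have hae : ∀ᵐ p ∂π, tauCoeff K N (1/2) (dist p.1 p.2) * (ν₁.rnDeriv μX p.2) ^ (-(1/N))
        ≤ ENNReal.ofReal (2⁻¹ * Real.cosh (Real.sqrt (K / (1 - N)) * D / 2) ^ (1/N - 1 : ℝ))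
          * ENNReal.ofReal (r₁ ^ (1/N : ℝ)) := by
      filter_upwards [hrn₁, hπA₀, hπA₁] with p h1 h2 h3
      refine mul_le_mul' (htau p h2 h3) ?_
      calc (ν₁.rnDeriv μX p.2) ^ (-(1/N)) ≤ ((μX A₁)⁻¹) ^ (-(1/N)) :=
            ENNReal.rpow_le_rpow h1 (by linarith)
        _ ≤ ENNReal.ofReal (r₁ ^ (1/N : ℝ)) := hden A₁ r₁ hr₁ hm₁ h0₁
    calc ∫⁻ p, tauCoeff K N (1/2) (dist p.1 p.2) * (ν₁.rnDeriv μX p.2) ^ (-(1/N)) ∂π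
        ≤ ∫⁻ _, ENNReal.ofReal (2⁻¹ * Real.cosh (Real.sqrt (K / (1 - N)) * D / 2) ^ (1/N - 1 : ℝ))
          * ENNReal.ofReal (r₁ ^ (1/N : ℝ)) ∂π := lintegral_mono_ae hae
      _ = _ := by rw [lintegral_const, hπuniv, mul_one]
  have hr₀p : (0:ℝ) ≤ r₀ ^ (1/N : ℝ) := Real.rpow_nonneg hr₀.le _
  have hr₁p : (0:ℝ) ≤ r₁ ^ (1/N : ℝ) := Real.rpow_nonneg hr₁.le _
  have hfinal : (1:ℝ≥0∞)
      ≤ ENNReal.ofReal ((2⁻¹ * Real.cosh (Real.sqrt (K / (1 - N)) * D / 2) ^ (1/N - 1 : ℝ))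
          * (r₀ ^ (1/N : ℝ) + r₁ ^ (1/N : ℝ))) := by
    rw [ENNReal.ofReal_mul hcD, ENNReal.ofReal_add hr₀p hr₁p, mul_add]
    exact le_trans h1le (le_trans hmain (add_le_add hbound₀ hbound₁))
  have hreal : (1:ℝ) ≤ (2⁻¹ * Real.cosh (Real.sqrt (K / (1 - N)) * D / 2) ^ (1/N - 1 : ℝ))
      * (r₀ ^ (1/N : ℝ) + r₁ ^ (1/N : ℝ)) := ENNReal.one_le_ofReal.1 hfinal
  have hHh : Real.cosh (Real.sqrt (K / (1 - N)) * D / 2) ^ (1 - 1/N : ℝ)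
      * Real.cosh (Real.sqrt (K / (1 - N)) * D / 2) ^ (1/N - 1 : ℝ) = 1 := by
    rw [← Real.rpow_add hcoshD, show (1 - 1/N) + (1/N - 1) = 0 by ring, Real.rpow_zero]
  have hHpos : (0:ℝ) < Real.cosh (Real.sqrt (K / (1 - N)) * D / 2) ^ (1 - 1/N : ℝ) :=
    Real.rpow_pos_of_pos hcoshD _
  nlinarith [mul_le_mul_of_nonneg_left hreal hHpos.le, hHh, hHpos]

end SepAux3

section SepAux4
open MeasureTheory ENNReal Set Metric Filter Topology

lemma cosh_to_acosh {K N : ℝ} (hK : 0 < K) (hN : N < 0) {D s : ℝ} (hD : 0 ≤ D)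
    (h : Real.cosh (Real.sqrt (K / (1 - N)) * D / 2) ^ (1 - 1/N : ℝ) ≤ s) :
    D ≤ 2 * Real.sqrt ((1 - N) / K) * acosh (s ^ (-N / (1 - N) : ℝ)) := by
  have hN0 : N ≠ 0 := ne_of_lt hN
  have h1N : (0:ℝ) < 1 - N := by linarith
  have hNinv : 1/N < 0 := div_neg_of_pos_of_neg one_pos hN
  have hp : (0:ℝ) < 1 - 1/N := by linarith
  have hcosh : (0:ℝ) < Real.cosh (Real.sqrt (K / (1 - N)) * D / 2) :=
    lt_of_lt_of_le one_pos (Real.one_le_cosh _)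
  have hsx : Real.cosh (Real.sqrt (K / (1 - N)) * D / 2) ≤ s ^ ((1:ℝ)/(1 - 1/N)) := by
    calc Real.cosh (Real.sqrt (K / (1 - N)) * D / 2)
        = (Real.cosh (Real.sqrt (K / (1 - N)) * D / 2) ^ (1 - 1/N : ℝ)) ^ ((1:ℝ)/(1 - 1/N)) := by
          rw [← Real.rpow_mul hcosh.le, mul_one_div_cancel hp.ne', Real.rpow_one]
      _ ≤ s ^ ((1:ℝ)/(1 - 1/N)) :=
          Real.rpow_le_rpow (Real.rpow_nonneg hcosh.le _) h (by positivity)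
  have hexp : (1:ℝ)/(1 - 1/N) = -N/(1 - N) := by
    have hN1 : (-1:ℝ) + N ≠ 0 := ne_of_lt (by linarith)
    field_simp
    rw [div_eq_iff (show (N:ℝ) - 1 ≠ 0 from ne_of_lt (by linarith))]
    ring
  rw [hexp] at hsx
  have hy0 : (0:ℝ) ≤ Real.sqrt (K / (1 - N)) * D / 2 :=
    div_nonneg (mul_nonneg (Real.sqrt_nonneg _) hD) (by norm_num)
  have h2 := le_acosh_of_cosh_le hy0 hsx
  have hab : Real.sqrt (K / (1 - N)) * Real.sqrt ((1 - N) / K) = 1 := by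
    rw [← Real.sqrt_mul (by positivity), show (K / (1 - N)) * ((1 - N) / K) = 1 by
      field_simp, Real.sqrt_one]
  nlinarith [mul_le_mul_of_nonneg_left h2 (Real.sqrt_nonneg ((1 - N)/K)), hab,
    Real.sqrt_nonneg ((1 - N)/K)]

end SepAux4

open MeasureTheory Set Metric Filter Topology in
theorem sep_bound_of_CD' {X : Type*} [MetricSpace X] [CompleteSpace X]
    [TopologicalSpace.SeparableSpace X] [MeasurableSpace X] [BorelSpace X]
    (μX : Measure X) [IsProbabilityMeasure μX]
    (K N : ℝ) (hK : 0 < K) (hN : N < 0) (hCD : IsCDSpace K N μX)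
    (κ₀ κ₁ : ℝ) (h0 : 0 < κ₀) (h1 : 0 < κ₁) (hsum : κ₀ + κ₁ < 1)
    (A₀ A₁ : Set X) (hA₀ : MeasurableSet A₀) (hA₁ : MeasurableSet A₁)
    (hm0 : ENNReal.ofReal κ₀ ≤ μX A₀) (hm1 : ENNReal.ofReal κ₁ ≤ μX A₁) :
    (⨅ x ∈ A₀, ⨅ y ∈ A₁, edist x y) ≤
      ENNReal.ofReal (2 * Real.sqrt ((1 - N) / K) *
        acosh (((κ₀ ^ (1 / N) + κ₁ ^ (1 / N)) / 2) ^ (-N / (1 - N)))) := by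
  have hne₀ : A₀.Nonempty := by
    by_contra h
    rw [not_nonempty_iff_eq_empty] at h
    rw [h, measure_empty] at hm0
    exact (ENNReal.ofReal_pos.2 h0).not_ge hm0
  have hne₁ : A₁.Nonempty := by
    by_contra h
    rw [not_nonempty_iff_eq_empty] at h
    rw [h, measure_empty] at hm1
    exact (ENNReal.ofReal_pos.2 h1).not_ge hm1
  obtain ⟨x₀, hx₀⟩ := hne₀
  obtain ⟨y₀, hy₀⟩ := hne₁
  set d0 := ⨅ x ∈ A₀, ⨅ y ∈ A₁, edist x y with hd0def
  have hd0le : d0 ≤ edist x₀ y₀ :=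
    le_trans (iInf₂_le x₀ hx₀) (iInf₂_le y₀ hy₀)
  have hd0top : d0 ≠ ∞ := (lt_of_le_of_lt hd0le (edist_lt_top x₀ y₀)).ne
  set D := d0.toReal with hDdef
  have hD0 : 0 ≤ D := ENNReal.toReal_nonneg
  have hdist : ∀ x ∈ A₀, ∀ y ∈ A₁, D ≤ dist x y := by
    intro x hx y hy
    have h1' : d0 ≤ edist x y := le_trans (iInf₂_le x hx) (iInf₂_le y hy)
    have h2' := ENNReal.toReal_mono (edist_ne_top x y) h1'
    rwa [dist_edist]
  rw [show d0 = ENNReal.ofReal D by rw [hDdef, ENNReal.ofReal_toReal hd0top]]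
  apply ENNReal.ofReal_le_ofReal
  set g : ℝ → ℝ := fun ε => 2 * Real.sqrt ((1 - N) / K) *
    acosh ((((κ₀ - ε) ^ (1/N : ℝ) + (κ₁ - ε) ^ (1/N : ℝ)) / 2) ^ (-N / (1 - N) : ℝ)) with hg
  have hmin : 0 < min κ₀ κ₁ := lt_min h0 h1
  have hkey : ∀ ε ∈ Ioo (0:ℝ) (min κ₀ κ₁), D ≤ g ε := by
    intro ε hε
    have hε0 : 0 < ε := hε.1
    have hεκ₀ : ε < κ₀ := lt_of_lt_of_le hε.2 (min_le_left _ _)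
    have hεκ₁ : ε < κ₁ := lt_of_lt_of_le hε.2 (min_le_right _ _)
    have hr₀ : 0 < κ₀ - ε := by linarith
    have hr₁ : 0 < κ₁ - ε := by linarith
    -- choose a ball that captures enough mass
    have htend : ∀ (A : Set X), Tendsto (fun n : ℕ => μX (A ∩ Metric.closedBall x₀ n)) atTop
        (𝓝 (μX A)) := by
      intro A
      have hmono : Monotone (fun n : ℕ => A ∩ Metric.closedBall x₀ n) := fun m n hmn =>
        inter_subset_inter_right _ (Metric.closedBall_subset_closedBall (Nat.cast_le.2 hmn))
      have hun : ⋃ n : ℕ, (A ∩ Metric.closedBall x₀ n) = A := by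
        rw [← inter_iUnion, Metric.iUnion_closedBall_nat, inter_univ]
      have := tendsto_measure_iUnion_atTop (μ := μX) hmono
      rwa [hun] at this
    have hev₀ : ∀ᶠ n : ℕ in atTop, ENNReal.ofReal (κ₀ - ε) < μX (A₀ ∩ Metric.closedBall x₀ n) :=
      (htend A₀).eventually_const_lt
        (lt_of_lt_of_le ((ENNReal.ofReal_lt_ofReal_iff h0).2 (by linarith)) hm0)
    have hev₁ : ∀ᶠ n : ℕ in atTop, ENNReal.ofReal (κ₁ - ε) < μX (A₁ ∩ Metric.closedBall x₀ n) :=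
      (htend A₁).eventually_const_lt
        (lt_of_lt_of_le ((ENNReal.ofReal_lt_ofReal_iff h1).2 (by linarith)) hm1)
    obtain ⟨n, hn₀, hn₁⟩ := (hev₀.and hev₁).exists
    have hcosh := key_cosh_bound μX K N hK hN hCD (κ₀ - ε) (κ₁ - ε) hr₀ hr₁
      (A₀ ∩ Metric.closedBall x₀ n) (A₁ ∩ Metric.closedBall x₀ n)
      (hA₀.inter Metric.isClosed_closedBall.measurableSet) (hA₁.inter Metric.isClosed_closedBall.measurableSet)
      x₀ n inter_subset_right inter_subset_right hn₀.le hn₁.le D hD0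
      (fun x hx y hy => hdist x (inter_subset_left hx) y (inter_subset_left hy))
    exact cosh_to_acosh hK hN hD0 hcosh
  have hev : ∀ᶠ ε in 𝓝[>] (0:ℝ), D ≤ g ε := by
    filter_upwards [Ioo_mem_nhdsGT hmin, self_mem_nhdsWithin] with ε hε _
    exact hkey ε hε
  have hz₀ : (0:ℝ) < (((κ₀ - 0) ^ (1/N : ℝ) + (κ₁ - 0) ^ (1/N : ℝ)) / 2) ^ (-N / (1 - N) : ℝ) := by
    apply Real.rpow_pos_of_pos
    rw [sub_zero, sub_zero]
    have := Real.rpow_pos_of_pos h0 (1/N : ℝ)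
    have := Real.rpow_pos_of_pos h1 (1/N : ℝ)
    linarith
  have hinner : ContinuousAt
      (fun ε : ℝ => (((κ₀ - ε) ^ (1/N : ℝ) + (κ₁ - ε) ^ (1/N : ℝ)) / 2) ^ (-N / (1 - N) : ℝ)) 0 := by
    apply ContinuousAt.rpow_const
    · exact (((continuousAt_const.sub continuousAt_id).rpow_const
        (Or.inl (show κ₀ - 0 ≠ 0 by rw [sub_zero]; exact h0.ne'))).add
        ((continuousAt_const.sub continuousAt_id).rpow_const
        (Or.inl (show κ₁ - 0 ≠ 0 by rw [sub_zero]; exact h1.ne')))).div_const 2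
    · exact Or.inr (le_of_lt (div_pos (by linarith) (by linarith)))
  have hcont : ContinuousAt g 0 := by
    rw [hg]
    exact continuousAt_const.mul (ContinuousAt.comp (g := acosh) (acosh_continuousAt hz₀) hinner)
  have htends : Tendsto g (𝓝[>] (0:ℝ)) (𝓝 (g 0)) :=
    (hcont.tendsto).mono_left nhdsWithin_le_nhds
  have hfin : D ≤ g 0 := ge_of_tendsto htends hev
  rw [hg] at hfin
  simpa using hfin

open MeasureTheory Set in
/-- Separation distance bound for `CD(K,N)` spaces with `K > 0`, `N < 0`. -/
theorem sep_bound_of_CD {X : Type*} [MetricSpace X] [CompleteSpace X]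
    [TopologicalSpace.SeparableSpace X] [MeasurableSpace X] [BorelSpace X]
    (μX : Measure X) [IsProbabilityMeasure μX]
    (K N : ℝ) (hK : 0 < K) (hN : N < 0) (hCD : IsCDSpace K N μX)
    (κ₀ κ₁ : ℝ) (h0 : 0 < κ₀) (h1 : 0 < κ₁) (hsum : κ₀ + κ₁ < 1)
    (A₀ A₁ : Set X) (hA₀ : MeasurableSet A₀) (hA₁ : MeasurableSet A₁)
    (hm0 : ENNReal.ofReal κ₀ ≤ μX A₀) (hm1 : ENNReal.ofReal κ₁ ≤ μX A₁) :
    (⨅ x ∈ A₀, ⨅ y ∈ A₁, edist x y) ≤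
      ENNReal.ofReal (2 * Real.sqrt ((1 - N) / K) *
        acosh (((κ₀ ^ (1 / N) + κ₁ ^ (1 / N)) / 2) ^ (-N / (1 - N)))) :=
  sep_bound_of_CD' μX K N hK hN hCD κ₀ κ₁ h0 h1 hsum A₀ A₁ hA₀ hA₁ hm0 hm1
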